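/- Fix D ≥ 0 and a real number a with 0 ≤ a < e^{−D}. Fix T > 0 and let η : [0, T] → ℝ be continuous and nondecreasing with η(0) = 0 and η(T) ≤ a. Define x_t = − ln( e^{−D} − a + η(t) ) for t ∈ [0, T]. Then for every t ∈ [0, T], x_t = x_T + ∫_{(t, T]} e^{x_s} dη(s), where the integral is the Lebesgue–Stieltjes integral with respect to the measure induced by η on [0, T]. -/

import Mathlib

open MeasureTheory

lemma map_stieltjes_restrict (η : StieltjesFunction ℝ) (hηc : Continuous η)
    {t T : ℝ} (htT : t ≤ T) :
    Measure.map η (η.measure.restrict (Set.Ioc t T)) =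
      volume.restrict (Set.Ioc (η t) (η T)) := by
  have hfin : IsFiniteMeasure (η.measure.restrict (Set.Ioc t T)) := by
    constructor
    rw [Measure.restrict_apply_univ, η.measure_Ioc]
    exact ENNReal.ofReal_lt_top
  have hmapfin : IsFiniteMeasure (Measure.map η (η.measure.restrict (Set.Ioc t T))) :=
    Measure.isFiniteMeasure_map _ _
  refine MeasureTheory.Measure.ext_of_Iic _ _ (fun y => ?_)
  rw [Measure.map_apply hηc.measurable measurableSet_Iic,
    Measure.restrict_apply (hηc.measurable measurableSet_Iic),
    Measure.restrict_apply measurableSet_Iic]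
  have hRHS : Set.Iic y ∩ Set.Ioc (η t) (η T) = Set.Ioc (η t) (min y (η T)) := by
    ext z
    simp only [Set.mem_inter_iff, Set.mem_Iic, Set.mem_Ioc, le_min_iff]
    tauto
  rw [hRHS, Real.volume_Ioc]
  rcases lt_or_ge y (η t) with hy | hy
  · have hempty : η ⁻¹' Set.Iic y ∩ Set.Ioc t T = ∅ := by
      ext s
      simp only [Set.mem_inter_iff, Set.mem_preimage, Set.mem_Iic, Set.mem_Ioc,
        Set.mem_empty_iff_false, iff_false]
      rintro ⟨h1, h2, _⟩
      exact absurd (le_trans (η.mono h2.le) h1) (not_le.mpr hy)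
    rw [hempty]
    have : min y (η T) - η t ≤ 0 := by
      have := min_le_left y (η T); linarith
    rw [ENNReal.ofReal_eq_zero.mpr this]
    simp
  · -- case η t ≤ y
    set A : Set ℝ := Set.Icc t T ∩ η ⁻¹' Set.Iic y with hA
    have hAclosed : IsClosed A := isClosed_Icc.inter (isClosed_Iic.preimage hηc)
    have hAne : A.Nonempty := ⟨t, ⟨le_refl t, htT⟩, hy⟩
    have hAbdd : BddAbove A := BddAbove.mono Set.inter_subset_left (bddAbove_Icc)
    set β := sSup A with hβ
    have hβmem : β ∈ A := hAclosed.csSup_mem hAne hAbdd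
    obtain ⟨⟨htβ, hβT⟩, hηβy⟩ := hβmem
    have hset : η ⁻¹' Set.Iic y ∩ Set.Ioc t T = Set.Ioc t β := by
      ext s
      simp only [Set.mem_inter_iff, Set.mem_preimage, Set.mem_Iic, Set.mem_Ioc]
      constructor
      · rintro ⟨h1, h2, h3⟩
        exact ⟨h2, le_csSup hAbdd ⟨⟨h2.le, h3⟩, h1⟩⟩
      · rintro ⟨h1, h2⟩
        exact ⟨le_trans (η.mono h2) hηβy, h1, le_trans h2 hβT⟩
    have hηβ : η β = min y (η T) := by
      refine le_antisymm (le_min hηβy (η.mono hβT)) ?_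
      by_contra h'
      push_neg at h'
      have hβT' : β < T := by
        rcases lt_or_eq_of_le hβT with h | h
        · exact h
        · exfalso
          rw [h] at h'
          exact absurd (min_le_right y (η T)) (not_le.mpr h')
      have hηβy' : η β < y := lt_of_lt_of_le h' (min_le_left _ _)
      -- eventually in 𝓝[>] β: η s < y and s < T
      have h1 : ∀ᶠ s in nhdsWithin β (Set.Ioi β), η s < y :=
        ((hηc.tendsto β).eventually (Filter.Tendsto.eventually_lt_const hηβy' Filter.tendsto_id)).filter_mono
          nhdsWithin_le_nhds
      have h2 : ∀ᶠ s in nhdsWithin β (Set.Ioi β), s < T :=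
        (Filter.Tendsto.eventually_lt_const hβT' Filter.tendsto_id).filter_mono nhdsWithin_le_nhds
      have h3 : ∀ᶠ s in nhdsWithin β (Set.Ioi β), β < s :=
        eventually_mem_nhdsWithin
      obtain ⟨s, ⟨hs1, hs2⟩, hs3⟩ := ((h1.and h2).and h3).exists
      have : s ∈ A := ⟨⟨le_trans htβ hs3.le, hs2.le⟩, hs1.le⟩
      exact absurd (le_csSup hAbdd this) (not_le.mpr hs3)
    rw [hset, η.measure_Ioc, hηβ]

/-- Fix `D ≥ 0` and `0 ≤ a < e^{−D}`, `T > 0`, and a continuous nondecreasing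
(Stieltjes) function `η` with `η 0 = 0` and `η T ≤ a`. Setting
`x_t = − ln(e^{−D} − a + η t)`, for every `t ∈ [0, T]` one has
`x_t = x_T + ∫_{(t, T]} e^{x_s} dη(s)` (a Lebesgue–Stieltjes integral with respect to the
measure induced by `η`). -/
theorem stmt_11 (D a T : ℝ) (hD : 0 ≤ D) (ha : 0 ≤ a) (ha' : a < Real.exp (-D)) (hT : 0 < T)
    (η : StieltjesFunction ℝ) (hηc : Continuous η) (hη0 : η 0 = 0) (hηT : η T ≤ a) :
    ∀ t ∈ Set.Icc 0 T,
      -Real.log (Real.exp (-D) - a + η t) =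
        -Real.log (Real.exp (-D) - a + η T) +
          ∫ s in Set.Ioc t T,
            Real.exp (-Real.log (Real.exp (-D) - a + η s)) ∂η.measure := by
  intro t ht
  obtain ⟨ht0, htT⟩ := ht
  set c : ℝ := Real.exp (-D) - a with hc
  have hc0 : 0 < c := sub_pos.mpr ha'
  have hηnn : ∀ s : ℝ, 0 ≤ s → 0 ≤ η s := fun s hs => hη0 ▸ η.mono hs
  have hpos : ∀ s : ℝ, 0 ≤ s → 0 < c + η s := fun s hs => by
    have := hηnn s hs; linarith
  have h1 : ∫ s in Set.Ioc t T, Real.exp (-Real.log (c + η s)) ∂η.measure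
      = ∫ s in Set.Ioc t T, (c + η s)⁻¹ ∂η.measure := by
    refine setIntegral_congr_fun measurableSet_Ioc (fun s hs => ?_)
    rw [Real.exp_neg, Real.exp_log (hpos s (le_trans ht0 hs.1.le))]
  have h2 : ∫ s in Set.Ioc t T, (c + η s)⁻¹ ∂η.measure
      = ∫ y in Set.Ioc (η t) (η T), (c + y)⁻¹ := by
    have hsm : AEStronglyMeasurable (fun y : ℝ => (c + y)⁻¹)
        (Measure.map η (η.measure.restrict (Set.Ioc t T))) :=
      ((measurable_const.add measurable_id).inv).aestronglyMeasurable
    rw [← map_stieltjes_restrict η hηc htT]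
    exact (integral_map hηc.measurable.aemeasurable hsm).symm
  have hle : η t ≤ η T := η.mono htT
  have h3 : ∫ y in Set.Ioc (η t) (η T), (c + y)⁻¹
      = Real.log (c + η T) - Real.log (c + η t) := by
    rw [← intervalIntegral.integral_of_le hle,
      intervalIntegral.integral_comp_add_left (fun x => x⁻¹) c,
      integral_inv, Real.log_div (hpos T hT.le).ne' (hpos t ht0).ne']
    intro h
    rcases h with h
    rw [Set.mem_uIcc] at h
    have h1 := hpos t ht0
    have h2 := hpos T hT.le
    rcases h with ⟨h, _⟩ | ⟨h, _⟩ <;> linarith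
  rw [h1, h2, h3]
  ring
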